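/- Let N ≥ 1, P ≥ 1 squarefree, and for n ≥ 1 let U_n be the set of pairs (a,b) of positive integers with lcm(a,b) ∣ P, gcd(a,b) ∣ 2N, and lcm(a,b) ∣ n − m_{ab}, where m_{ab} is the least m ≥ 0 with a ∣ N−m, b ∣ N+m. Define u_n = ∑_{(a,b) ∈ U_n} μ(a)μ(b). Then u_n = 1 if (N−n)(N+n) is coprime to P, and u_n = 0 otherwise. -/

import Mathlib

open ArithmeticFunction ArithmeticFunction.Moebius ArithmeticFunction.zeta in
lemma musum (g : ℕ) : ∑ d ∈ g.divisors, μ d = if g = 1 then 1 else 0 := by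
  have h : (μ * (ζ : ArithmeticFunction ℤ)) g = (1 : ArithmeticFunction ℤ) g := by
    rw [moebius_mul_coe_zeta]
  rw [coe_mul_zeta_apply, one_apply] at h
  exact h

open ArithmeticFunction in
lemma filt (P : ℕ) (hP : P ≠ 0) (M : ℤ) :
    P.divisors.filter (fun a : ℕ => (a : ℤ) ∣ M) = (Nat.gcd M.natAbs P).divisors := by
  ext a
  simp only [Finset.mem_filter, Nat.mem_divisors, Nat.dvd_gcd_iff, Int.natCast_dvd]
  constructor
  · rintro ⟨⟨h1, _⟩, h2⟩
    exact ⟨⟨h2, h1⟩, fun h => hP (Nat.eq_zero_of_gcd_eq_zero_right h)⟩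
  · rintro ⟨⟨h2, h1⟩, _⟩
    exact ⟨⟨h1, hP⟩, h2⟩

open ArithmeticFunction ArithmeticFunction.Moebius in
theorem stmt_11 (N P : ℕ) (hN : 1 ≤ N) (hP : 1 ≤ P) (hsq : Squarefree P)
    (m : ℕ → ℕ → ℕ)
    (hm : ∀ a b : ℕ, Nat.lcm a b ∣ P → Nat.gcd a b ∣ 2 * N →
      IsLeast {k : ℕ | (a : ℤ) ∣ (N : ℤ) - (k : ℤ) ∧ (b : ℤ) ∣ (N : ℤ) + (k : ℤ)} (m a b))
    (n : ℕ) (hn : 1 ≤ n) :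
    (∑ x ∈ (P.divisors ×ˢ P.divisors).filter
        (fun x : ℕ × ℕ => Nat.gcd x.1 x.2 ∣ 2 * N ∧
          (Nat.lcm x.1 x.2 : ℤ) ∣ (n : ℤ) - (m x.1 x.2 : ℤ)),
        μ x.1 * μ x.2)
      = if Int.gcd (((N : ℤ) - (n : ℤ)) * ((N : ℤ) + (n : ℤ))) (P : ℤ) = 1 then 1 else 0 := by
  have hP0 : P ≠ 0 := by omega
  have hfil : (P.divisors ×ˢ P.divisors).filter
        (fun x : ℕ × ℕ => Nat.gcd x.1 x.2 ∣ 2 * N ∧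
          (Nat.lcm x.1 x.2 : ℤ) ∣ (n : ℤ) - (m x.1 x.2 : ℤ))
      = (P.divisors.filter (fun a : ℕ => (a : ℤ) ∣ (N : ℤ) - (n : ℤ))) ×ˢ
        (P.divisors.filter (fun b : ℕ => (b : ℤ) ∣ (N : ℤ) + (n : ℤ))) := by
    ext ⟨a, b⟩
    simp only [Finset.mem_filter, Finset.mem_product]
    constructor
    · rintro ⟨⟨ha, hb⟩, hg, hl⟩
      have hlcm : Nat.lcm a b ∣ P := Nat.lcm_dvd (Nat.dvd_of_mem_divisors ha) (Nat.dvd_of_mem_divisors hb)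
      obtain ⟨⟨hma, hmb⟩, _⟩ := hm a b hlcm hg
      have hal : (a : ℤ) ∣ (n : ℤ) - (m a b : ℤ) :=
        dvd_trans (Int.natCast_dvd_natCast.mpr (Nat.dvd_lcm_left a b)) hl
      have hbl : (b : ℤ) ∣ (n : ℤ) - (m a b : ℤ) :=
        dvd_trans (Int.natCast_dvd_natCast.mpr (Nat.dvd_lcm_right a b)) hl
      refine ⟨⟨ha, ?_⟩, hb, ?_⟩
      · have := dvd_sub hma hal
        have heq : ((N : ℤ) - (m a b : ℤ)) - ((n : ℤ) - (m a b : ℤ)) = (N : ℤ) - n := by ring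
        rwa [heq] at this
      · have := dvd_add hmb hbl
        have heq : ((N : ℤ) + (m a b : ℤ)) + ((n : ℤ) - (m a b : ℤ)) = (N : ℤ) + n := by ring
        rwa [heq] at this
    · rintro ⟨⟨ha, hna⟩, hb, hnb⟩
      have hlcm : Nat.lcm a b ∣ P := Nat.lcm_dvd (Nat.dvd_of_mem_divisors ha) (Nat.dvd_of_mem_divisors hb)
      have hga : (Nat.gcd a b : ℤ) ∣ (N : ℤ) - n :=
        dvd_trans (Int.natCast_dvd_natCast.mpr (Nat.gcd_dvd_left a b)) hna
      have hgb : (Nat.gcd a b : ℤ) ∣ (N : ℤ) + n :=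
        dvd_trans (Int.natCast_dvd_natCast.mpr (Nat.gcd_dvd_right a b)) hnb
      have hg : Nat.gcd a b ∣ 2 * N := by
        have := dvd_add hga hgb
        have heq : ((N : ℤ) - n) + ((N : ℤ) + n) = ((2 * N : ℕ) : ℤ) := by push_cast; ring
        rw [heq] at this
        exact_mod_cast this
      obtain ⟨⟨hma, hmb⟩, hle⟩ := hm a b hlcm hg
      refine ⟨⟨ha, hb⟩, hg, ?_⟩
      have hal : (a : ℤ) ∣ (n : ℤ) - (m a b : ℤ) := by
        have := dvd_sub hna hma
        have heq : ((N : ℤ) - n) - ((N : ℤ) - (m a b : ℤ)) = (m a b : ℤ) - n := by ring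
        rw [heq] at this
        have h2 := dvd_neg.mpr this
        rwa [neg_sub] at h2
      have hbl : (b : ℤ) ∣ (n : ℤ) - (m a b : ℤ) := by
        have := dvd_sub hnb hmb
        have heq : ((N : ℤ) + n) - ((N : ℤ) + (m a b : ℤ)) = (n : ℤ) - m a b := by ring
        rwa [heq] at this
      have := _root_.lcm_dvd hal hbl
      rw [← Int.coe_lcm] at this
      simpa [Int.lcm, Int.natAbs_natCast] using this
  rw [hfil, Finset.sum_product, ← Finset.sum_mul_sum]
  rw [filt P hP0, filt P hP0, musum, musum]
  have hco : Int.gcd (((N : ℤ) - (n : ℤ)) * ((N : ℤ) + (n : ℤ))) (P : ℤ) = 1 ↔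
      (Nat.gcd ((N : ℤ) - n).natAbs P = 1 ∧ Nat.gcd ((N : ℤ) + n).natAbs P = 1) := by
    rw [← Int.isCoprime_iff_gcd_eq_one, IsCoprime.mul_left_iff,
      Int.isCoprime_iff_gcd_eq_one, Int.isCoprime_iff_gcd_eq_one]
    simp [Int.gcd, Int.natAbs_natCast]
  by_cases h1 : Nat.gcd ((N : ℤ) - n).natAbs P = 1 <;>
    by_cases h2 : Nat.gcd ((N : ℤ) + n).natAbs P = 1 <;>
    simp [h1, h2, hco]
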